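/- Let M be a maximal ideal of a domain D such that every function in the ring of functions R from E to D takes values in only finitely many residue classes mod M, and let Q be a prime ideal of R containing R(E,M) = {f : f(E) ⊆ M}. Then Q is a maximal ideal of R and R/Q is isomorphic to D/M. -/

import Mathlib

theorem stmt15 {D : Type*} [CommRing D] [IsDomain D] {E : Set D}
    (R : Subring (↥E → D)) (hconst : ∀ d : D, (fun _ : ↥E => d) ∈ R)
    (M : Ideal D) (hM : M.IsMaximal)
    (hfin : ∀ f : R,
      (Set.range fun e : ↥E => Ideal.Quotient.mk M ((f : ↥E → D) e)).Finite)
    (Q : Ideal R) (hQ : Q.IsPrime)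
    (hQM : ∀ f : R, (∀ e : ↥E, (f : ↥E → D) e ∈ M) → f ∈ Q) :
    Q.IsMaximal ∧ Nonempty ((R ⧸ Q) ≃+* D ⧸ M) := by
  classical
  haveI := hM
  letI : Field (D ⧸ M) := Ideal.Quotient.field M
  -- the constant-function ring hom φ : D →+* R
  let φ : D →+* R :=
    { toFun := fun d => ⟨fun _ => d, hconst d⟩
      map_one' := rfl
      map_mul' := fun a b => rfl
      map_zero' := rfl
      map_add' := fun a b => rfl }
  let ψ : D →+* R ⧸ Q := (Ideal.Quotient.mk Q).comp φ
  -- membership in Q for constants with values in M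
  have hMQ : ∀ d : D, d ∈ M → φ d ∈ Q := fun d hd => hQM _ (fun _ => hd)
  -- kernel of ψ is M
  have hker : RingHom.ker ψ = M := by
    ext d
    simp only [RingHom.mem_ker, ψ, RingHom.comp_apply, Ideal.Quotient.eq_zero_iff_mem]
    constructor
    · intro h
      by_contra hd
      obtain ⟨a, m, hm, hmd⟩ := hM.exists_inv hd
      have : φ 1 ∈ Q := by
        rw [show (1 : D) = a * d + m from hmd.symm, φ.map_add, φ.map_mul]
        exact Q.add_mem (Q.mul_mem_left _ h) (hMQ m hm)
      exact hQ.ne_top (Q.eq_top_of_isUnit_mem this isUnit_one)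
    · intro hd
      exact hMQ d hd
  -- evaluation homs
  let ev : ↥E → (R →+* D) := fun e => (Pi.evalRingHom (fun _ : ↥E => D) e).comp R.subtype
  -- ψ is surjective
  have hsurj : Function.Surjective ψ := by
    intro x
    obtain ⟨f, rfl⟩ := Ideal.Quotient.mk_surjective x
    set S : Finset (D ⧸ M) := (hfin f).toFinset with hS
    have hrep : ∀ c : D ⧸ M, ∃ d : D, Ideal.Quotient.mk M d = c :=
      Ideal.Quotient.mk_surjective
    choose g hg using hrep
    have hprod : (∏ c ∈ S, (f - φ (g c))) ∈ Q := by
      apply hQM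
      intro e
      have he : Ideal.Quotient.mk M ((f : ↥E → D) e) ∈ S := by
        rw [hS, Set.Finite.mem_toFinset]
        exact ⟨e, rfl⟩
      have hval : ((∏ c ∈ S, (f - φ (g c)) : R) : ↥E → D) e
          = ∏ c ∈ S, ((f : ↥E → D) e - g c) := by
        have := map_prod (ev e) (fun c => f - φ (g c)) S
        simpa [ev, φ] using this
      rw [hval, ← Finset.prod_erase_mul _ _ he]
      apply M.mul_mem_left
      rw [← Ideal.Quotient.eq_zero_iff_mem, map_sub, hg, sub_self]
    rw [hQ.prod_mem_iff] at hprod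
    obtain ⟨c, _, hc⟩ := hprod
    refine ⟨g c, ?_⟩
    have : Ideal.Quotient.mk Q f = Ideal.Quotient.mk Q (φ (g c)) := by
      rw [Ideal.Quotient.mk_eq_mk_iff_sub_mem]
      exact hc
    exact this.symm
  -- build the isomorphism
  have e := RingHom.quotientKerEquivOfSurjective hsurj
  replace e := (Ideal.quotEquivOfEq hker.symm).trans e
  refine ⟨Ideal.Quotient.maximal_of_isField Q ?_, ⟨e.symm⟩⟩
  exact MulEquiv.isField (Field.toIsField (D ⧸ M)) e.symm.toMulEquiv
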